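/- Let f, g : ℝⁿ → ℝ ∪ {∞} be proper polyhedral convex functions and let h := f □ g be their infimal convolution, h(x) = inf_y { f(x−y) + g(y) }. If x ∈ ℝⁿ satisfies h(x) < ∞, then h(x) = h**(x), where h** is the biconjugate (Fenchel conjugate applied twice). -/

import Mathlib

open scoped RealInnerProductSpace

/-- A function is polyhedral iff its epigraph is an intersection of finitely many
closed halfspaces of `ℝⁿ × ℝ`. -/
def IsPolyhedralFn {n : ℕ} (g : EuclideanSpace ℝ (Fin n) → EReal) : Prop :=
  ∃ (m : ℕ) (a : Fin m → EuclideanSpace ℝ (Fin n)) (r b : Fin m → ℝ),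
    {p : EuclideanSpace ℝ (Fin n) × ℝ | g p.1 ≤ (p.2 : EReal)} =
      {p : EuclideanSpace ℝ (Fin n) × ℝ | ∀ i, ⟪a i, p.1⟫ + r i * p.2 ≤ b i}

def EProper {n : ℕ} (g : EuclideanSpace ℝ (Fin n) → EReal) : Prop :=
  (∃ x, g x ≠ ⊤) ∧ ∀ x, g x ≠ ⊥

/-- Fenchel conjugate. -/
noncomputable def EConj {n : ℕ} (g : EuclideanSpace ℝ (Fin n) → EReal) :
    EuclideanSpace ℝ (Fin n) → EReal :=
  fun v => ⨆ x, ((⟪v, x⟫ : ℝ) : EReal) - g x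

/-! ### Polyhedral set infrastructure -/

/-- A set is a polyhedral set if it is the solution set of finitely many
linear inequalities. -/
def IsPolySet {V : Type*} [AddCommGroup V] [Module ℝ V] (S : Set V) : Prop :=
  ∃ (ι : Type) (_ : Fintype ι) (φ : ι → V →ₗ[ℝ] ℝ) (b : ι → ℝ),
    S = {x | ∀ i, φ i x ≤ b i}

lemma IsPolySet.preimage {V W : Type*} [AddCommGroup V] [Module ℝ V]
    [AddCommGroup W] [Module ℝ W] {S : Set V} (hS : IsPolySet S)
    (L : W →ₗ[ℝ] V) : IsPolySet (L ⁻¹' S) := by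
  obtain ⟨ι, _, φ, b, rfl⟩ := hS
  exact ⟨ι, ‹_›, fun i => (φ i).comp L, b, rfl⟩

lemma IsPolySet.inter {V : Type*} [AddCommGroup V] [Module ℝ V]
    {S T : Set V} (hS : IsPolySet S) (hT : IsPolySet T) : IsPolySet (S ∩ T) := by
  obtain ⟨ι, _, φ, b, rfl⟩ := hS
  obtain ⟨κ, _, ψ, c, rfl⟩ := hT
  refine ⟨ι ⊕ κ, inferInstance, Sum.elim φ ψ, Sum.elim b c, ?_⟩
  ext x
  constructor
  · rintro ⟨h1, h2⟩ (i | j)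
    · exact h1 i
    · exact h2 j
  · intro hx
    exact ⟨fun i => hx (Sum.inl i), fun j => hx (Sum.inr j)⟩

lemma IsPolySet.image_equiv {V W : Type*} [AddCommGroup V] [Module ℝ V]
    [AddCommGroup W] [Module ℝ W] {S : Set V} (hS : IsPolySet S)
    (e : V ≃ₗ[ℝ] W) : IsPolySet (e '' S) := by
  have : (e '' S) = (e.symm : W →ₗ[ℝ] V) ⁻¹' S := by
    ext w; simp [Set.mem_image, Set.mem_preimage]
    constructor
    · rintro ⟨v, hv, rfl⟩; simpa using hv
    · intro hw; exact ⟨e.symm w, hw, by simp⟩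
  rw [this]; exact hS.preimage _

/-- Fourier–Motzkin elimination: projecting a polyhedral set of `V × ℝ` along the
last coordinate gives a polyhedral set. -/
lemma IsPolySet.elim_last {V : Type*} [AddCommGroup V] [Module ℝ V]
    {S : Set (V × ℝ)} (hS : IsPolySet S) : IsPolySet {x : V | ∃ t : ℝ, (x, t) ∈ S} := by
  obtain ⟨ι, _, φ, b, rfl⟩ := hS
  classical
  set ψ : ι → V →ₗ[ℝ] ℝ := fun i => (φ i).comp (LinearMap.inl ℝ V ℝ) with hψ
  set r : ι → ℝ := fun i => φ i (0, 1) with hr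
  have hsplit : ∀ i (x : V) (t : ℝ), φ i (x, t) = ψ i x + t * r i := by
    intro i x t
    have : (x, t) = (x, (0:ℝ)) + t • ((0:V), (1:ℝ)) := by
      simp [Prod.ext_iff]
    rw [this, map_add, map_smul]
    simp [hψ, hr, smul_eq_mul]
  -- new system
  refine ⟨ι ⊕ (ι × ι), inferInstance,
    Sum.elim (fun i => if r i = 0 then ψ i else 0)
      (fun p => if 0 < r p.1 ∧ r p.2 < 0 then r p.1 • ψ p.2 - r p.2 • ψ p.1 else 0),
    Sum.elim (fun i => if r i = 0 then b i else 0)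
      (fun p => if 0 < r p.1 ∧ r p.2 < 0 then r p.1 * b p.2 - r p.2 * b p.1 else 0), ?_⟩
  ext x
  simp only [Set.mem_setOf_eq, Sum.forall, Sum.elim_inl, Sum.elim_inr]
  constructor
  · rintro ⟨t, ht⟩
    constructor
    · intro i
      by_cases h0 : r i = 0
      · simp only [h0, if_pos rfl, if_true]
        have := ht i
        rw [hsplit i x t, h0] at this
        simpa using this
      · simp [h0]
    · rintro ⟨i, j⟩
      by_cases hij : 0 < r i ∧ r j < 0
      · simp only [if_pos hij]
        have hi := ht i; have hj := ht j
        rw [hsplit i x t] at hi; rw [hsplit j x t] at hj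
        -- from hi : ψ i x + t * r i ≤ b i  (r i > 0)
        -- from hj : ψ j x + t * r j ≤ b j  (r j < 0)
        have h1 : (-r j) * (ψ i x + t * r i) ≤ (-r j) * b i :=
          mul_le_mul_of_nonneg_left hi (by linarith [hij.2])
        have h2 : r i * (ψ j x + t * r j) ≤ r i * b j :=
          mul_le_mul_of_nonneg_left hj (le_of_lt hij.1)
        simp only [LinearMap.sub_apply, LinearMap.smul_apply, smul_eq_mul]
        nlinarith [h1, h2]
      · simp [hij]
  · rintro ⟨hZ, hPN⟩
    -- construct t
    by_cases hP : ∃ i, 0 < r i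
    · -- upper bounds exist; take min over P
      obtain ⟨PF, hPF⟩ : ∃ PF : Finset ι, ∀ i, i ∈ PF ↔ 0 < r i :=
        ⟨Finset.univ.filter (fun i => 0 < r i), by simp⟩
      have hPFne : PF.Nonempty := by
        obtain ⟨i, hi⟩ := hP; exact ⟨i, (hPF i).2 hi⟩
      set t := (PF.image (fun i => (b i - ψ i x) / r i)).min'
        (hPFne.image _) with htdef
      refine ⟨t, ?_⟩
      have htle : ∀ i, 0 < r i → t ≤ (b i - ψ i x) / r i := by
        intro i hi
        exact Finset.min'_le _ _ (Finset.mem_image_of_mem _ ((hPF i).2 hi))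
      have htmem : ∃ i, 0 < r i ∧ t = (b i - ψ i x) / r i := by
        have := Finset.min'_mem (PF.image (fun i => (b i - ψ i x) / r i)) (hPFne.image _)
        rw [Finset.mem_image] at this
        obtain ⟨i, hiPF, hieq⟩ := this
        exact ⟨i, (hPF i).1 hiPF, hieq.symm⟩
      intro i
      rw [hsplit i x t]
      rcases lt_trichotomy (r i) 0 with hneg | h0 | hpos
      · -- lower bound: use pair inequality with the witness of the min
        obtain ⟨k, hk, hkt⟩ := htmem
        have hthis := hPN (k, i)
        simp only [if_pos (And.intro hk hneg), LinearMap.sub_apply,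
          LinearMap.smul_apply, smul_eq_mul] at hthis
        -- hthis : r k * ψ i x - r i * ψ k x ≤ r k * b i - r i * b k
        rw [hkt]
        have hq : (b k - ψ k x) / r k * r k = b k - ψ k x :=
          div_mul_cancel₀ _ (ne_of_gt hk)
        have key : r k * (ψ i x + (b k - ψ k x) / r k * r i) ≤ r k * b i := by
          nlinarith [hthis, hq]
        exact le_of_mul_le_mul_left key hk
      · have hthis := hZ i
        simp only [if_pos h0] at hthis
        rw [h0, mul_zero, add_zero]
        exact hthis
      · have := htle i hpos
        rw [le_div_iff₀ hpos] at this
        linarith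
    · push_neg at hP
      by_cases hN : ∃ j, r j < 0
      · obtain ⟨NF, hNF⟩ : ∃ NF : Finset ι, ∀ j, j ∈ NF ↔ r j < 0 :=
          ⟨Finset.univ.filter (fun j => r j < 0), by simp⟩
        have hNFne : NF.Nonempty := by
          obtain ⟨j, hj⟩ := hN; exact ⟨j, (hNF j).2 hj⟩
        set t := (NF.image (fun j => (b j - ψ j x) / r j)).max'
          (hNFne.image _) with htdef
        refine ⟨t, ?_⟩
        intro i
        rw [hsplit i x t]
        rcases lt_trichotomy (r i) 0 with hneg | h0 | hpos
        · have hle : (b i - ψ i x) / r i ≤ t := by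
            rw [htdef]
            exact Finset.le_max' _ _
              (Finset.mem_image_of_mem (fun j => (b j - ψ j x) / r j) ((hNF i).2 hneg))
          rw [div_le_iff_of_neg hneg] at hle
          nlinarith
        · have hthis := hZ i
          simp only [if_pos h0] at hthis
          rw [h0, mul_zero, add_zero]
          exact hthis
        · exact absurd hpos (not_lt.2 (hP i))
      · push_neg at hN
        refine ⟨0, fun i => ?_⟩
        have h0 : r i = 0 := le_antisymm (hP i) (hN i)
        have hthis := hZ i
        simp only [if_pos h0] at hthis
        rw [hsplit i x 0, h0]
        simpa using hthis

/-- The split equivalence `(Fin (n+1) → ℝ) ≃ₗ (Fin n → ℝ) × ℝ`. -/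
noncomputable def splitEquiv (n : ℕ) : (Fin (n + 1) → ℝ) ≃ₗ[ℝ] (Fin n → ℝ) × ℝ where
  toFun w := (fun i => w i.castSucc, w (Fin.last n))
  invFun p := Fin.snoc p.1 p.2
  map_add' w₁ w₂ := by ext <;> simp
  map_smul' c w := by ext <;> simp
  left_inv w := funext fun i => by
    cases i using Fin.lastCases <;> simp
  right_inv p := by
    ext i <;> simp [Fin.snoc_castSucc, Fin.snoc_last]

lemma IsPolySet.proj_pi {V : Type*} [AddCommGroup V] [Module ℝ V] :
    ∀ (k : ℕ) (S : Set (V × (Fin k → ℝ))), IsPolySet S →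
      IsPolySet {x : V | ∃ w, (x, w) ∈ S} := by
  intro k
  induction k with
  | zero =>
    intro S hS
    have : {x : V | ∃ w, (x, w) ∈ S} =
        (LinearMap.inl ℝ V (Fin 0 → ℝ)) ⁻¹' S := by
      ext x
      constructor
      · rintro ⟨w, hw⟩
        have : w = 0 := Subsingleton.elim _ _
        simpa [this] using hw
      · intro hx
        exact ⟨0, hx⟩
    rw [this]
    exact hS.preimage _
  | succ k ih =>
    intro S hS
    -- transfer along (V × (Fin (k+1) → ℝ)) ≃ (V × (Fin k → ℝ)) × ℝ
    let e : (V × (Fin (k + 1) → ℝ)) ≃ₗ[ℝ] ((V × (Fin k → ℝ)) × ℝ) :=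
      ((LinearEquiv.refl ℝ V).prodCongr (splitEquiv k)).trans
        (LinearEquiv.prodAssoc ℝ V (Fin k → ℝ) ℝ).symm
    have hS' : IsPolySet (e '' S) := hS.image_equiv e
    have h1 : IsPolySet {q : V × (Fin k → ℝ) | ∃ t : ℝ, (q, t) ∈ e '' S} :=
      hS'.elim_last
    have h2 := ih _ h1
    convert h2 using 1
    ext x
    simp only [Set.mem_setOf_eq]
    constructor
    · rintro ⟨w, hw⟩
      exact ⟨fun i => w i.castSucc, w (Fin.last k), ⟨(x, w), hw, rfl⟩⟩
    · rintro ⟨p, t, ⟨⟨x', w'⟩, hmem, heq⟩⟩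
      have h3 : (((x' : V), fun i => w' i.castSucc), w' (Fin.last k)) = ((x, p), t) := heq
      have hx' : x' = x := congrArg (fun q => q.1.1) h3
      exact ⟨w', hx' ▸ hmem⟩

lemma IsPolySet.proj {V W : Type*} [AddCommGroup V] [Module ℝ V]
    [AddCommGroup W] [Module ℝ W] [FiniteDimensional ℝ W]
    {S : Set (V × W)} (hS : IsPolySet S) : IsPolySet {x : V | ∃ w : W, (x, w) ∈ S} := by
  classical
  let e : W ≃ₗ[ℝ] (Fin (Module.finrank ℝ W) → ℝ) := (Module.finBasis ℝ W).equivFun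
  have hS' : IsPolySet ((LinearMap.id.prodMap (e.symm : (Fin (Module.finrank ℝ W) → ℝ) →ₗ[ℝ] W)) ⁻¹' S) :=
    hS.preimage _
  have h := IsPolySet.proj_pi _ _ hS'
  convert h using 1
  ext x
  simp only [Set.mem_setOf_eq, Set.mem_preimage, LinearMap.prodMap_apply, LinearMap.id_coe, id_eq]
  constructor
  · rintro ⟨w, hw⟩
    exact ⟨e w, by simpa using hw⟩
  · rintro ⟨p, hp⟩
    exact ⟨e.symm p, hp⟩

lemma IsPolySet.isClosed {V : Type*} [NormedAddCommGroup V] [NormedSpace ℝ V]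
    [FiniteDimensional ℝ V] {S : Set V} (hS : IsPolySet S) : IsClosed S := by
  obtain ⟨ι, _, φ, b, rfl⟩ := hS
  have : {x | ∀ i, φ i x ≤ b i} = ⋂ i, {x | φ i x ≤ b i} := by ext; simp
  rw [this]
  exact isClosed_iInter fun i =>
    isClosed_le (φ i).continuous_of_finiteDimensional continuous_const

lemma isPolySet_epi {n : ℕ} {f : EuclideanSpace ℝ (Fin n) → EReal}
    (hf : IsPolyhedralFn f) :
    IsPolySet {p : EuclideanSpace ℝ (Fin n) × ℝ | f p.1 ≤ (p.2 : EReal)} := by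
  obtain ⟨m, a, r, b, heq⟩ := hf
  refine ⟨Fin m, inferInstance, fun i =>
    ((innerₛₗ ℝ (a i)).comp (LinearMap.fst ℝ _ ℝ)) + (r i) • (LinearMap.snd ℝ _ ℝ), b, ?_⟩
  rw [heq]
  ext p
  simp [innerₛₗ_apply_apply, smul_eq_mul]

/-- if `f, g` are proper polyhedral convex and `h = f □ g` is their
infimal convolution, then `h(x) = h**(x)` at every point where `h(x) < ∞`. -/
theorem stmt4 {n : ℕ} (f g : EuclideanSpace ℝ (Fin n) → EReal)
    (hfp : EProper f) (hgp : EProper g)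
    (hfpoly : IsPolyhedralFn f) (hgpoly : IsPolyhedralFn g)
    (h : EuclideanSpace ℝ (Fin n) → EReal)
    (hh : ∀ x, h x = ⨅ y, f (x - y) + g y)
    (x : EuclideanSpace ℝ (Fin n)) (hx : h x ≠ ⊤) :
    EConj (EConj h) x = h x := by
  classical
  -- the linear maps used to build the big polyhedral system
  let L1 : (((EuclideanSpace ℝ (Fin n)) × ℝ) × ((EuclideanSpace ℝ (Fin n)) × (ℝ × ℝ))) →ₗ[ℝ] ((EuclideanSpace ℝ (Fin n)) × ℝ) :=
    { toFun := fun q => (q.1.1 - q.2.1, q.2.2.1)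
      map_add' := fun p q => by
        simp only [Prod.fst_add, Prod.snd_add, Prod.mk_add_mk, Prod.mk.injEq]
        exact ⟨by abel, trivial⟩
      map_smul' := fun c p => by
        simp only [Prod.smul_fst, Prod.smul_snd, RingHom.id_apply, Prod.smul_mk,
          Prod.mk.injEq]
        exact ⟨by rw [smul_sub], trivial⟩ }
  let L2 : (((EuclideanSpace ℝ (Fin n)) × ℝ) × ((EuclideanSpace ℝ (Fin n)) × (ℝ × ℝ))) →ₗ[ℝ] ((EuclideanSpace ℝ (Fin n)) × ℝ) :=
    { toFun := fun q => (q.2.1, q.2.2.2)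
      map_add' := fun p q => rfl
      map_smul' := fun c p => rfl }
  let φc : (((EuclideanSpace ℝ (Fin n)) × ℝ) × ((EuclideanSpace ℝ (Fin n)) × (ℝ × ℝ))) →ₗ[ℝ] ℝ :=
    { toFun := fun q => q.2.2.1 + q.2.2.2 - q.1.2
      map_add' := fun p q => by
        simp only [Prod.fst_add, Prod.snd_add]
        ring
      map_smul' := fun c p => by
        simp only [Prod.smul_fst, Prod.smul_snd, RingHom.id_apply, smul_eq_mul]
        ring }
  let Q : Set (((EuclideanSpace ℝ (Fin n)) × ℝ) × ((EuclideanSpace ℝ (Fin n)) × (ℝ × ℝ))) :=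
    (L1 ⁻¹' {p : (EuclideanSpace ℝ (Fin n)) × ℝ | f p.1 ≤ (p.2 : EReal)} ∩
      L2 ⁻¹' {p : (EuclideanSpace ℝ (Fin n)) × ℝ | g p.1 ≤ (p.2 : EReal)}) ∩ {q | φc q ≤ 0}
  have hQ : IsPolySet Q :=
    (((isPolySet_epi hfpoly).preimage L1).inter ((isPolySet_epi hgpoly).preimage L2)).inter
      (show IsPolySet {q : ((EuclideanSpace ℝ (Fin n)) × ℝ) × ((EuclideanSpace ℝ (Fin n)) × (ℝ × ℝ)) | φc q ≤ 0} from
        ⟨Unit, inferInstance, fun _ => φc, fun _ => 0, by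
          ext q
          exact ⟨fun hq _ => hq, fun hq => hq ()⟩⟩)
  have hP : IsPolySet {p : (EuclideanSpace ℝ (Fin n)) × ℝ | ∃ z, (p, z) ∈ Q} := hQ.proj
  -- P ⊆ epi h
  have hPsub : ∀ p : (EuclideanSpace ℝ (Fin n)) × ℝ, (∃ z, (p, z) ∈ Q) → h p.1 ≤ (p.2 : EReal) := by
    rintro ⟨x', w⟩ ⟨⟨y, s, u⟩, ⟨⟨h1, h2⟩, h3⟩⟩
    have h1' : f (x' - y) ≤ (s : EReal) := h1
    have h2' : g y ≤ (u : EReal) := h2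
    have h3' : s + u - w ≤ 0 := h3
    rw [hh x']
    refine le_trans (iInf_le _ y) ?_
    calc f (x' - y) + g y ≤ (s : EReal) + (u : EReal) := add_le_add h1' h2'
      _ = ((s + u : ℝ) : EReal) := (EReal.coe_add s u).symm
      _ ≤ (w : EReal) := EReal.coe_le_coe_iff.2 (by linarith)
  -- epi h ⊆ P  (via closedness)
  have hPclosed : IsClosed {p : (EuclideanSpace ℝ (Fin n)) × ℝ | ∃ z, (p, z) ∈ Q} := hP.isClosed
  have hepi : {p : (EuclideanSpace ℝ (Fin n)) × ℝ | ∃ z, (p, z) ∈ Q} = {p : (EuclideanSpace ℝ (Fin n)) × ℝ | h p.1 ≤ (p.2 : EReal)} := by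
    ext ⟨x', w⟩
    simp only [Set.mem_setOf_eq]
    constructor
    · exact fun hz => hPsub (x', w) hz
    · intro hxw
      -- approximate membership
      have happrox : ∀ ε : ℝ, 0 < ε → ∃ z, (((x' : (EuclideanSpace ℝ (Fin n))), w + ε), z) ∈ Q := by
        intro ε hε
        have hlt : h x' < ((w + ε : ℝ) : EReal) :=
          lt_of_le_of_lt hxw (EReal.coe_lt_coe_iff.2 (by linarith))
        rw [hh x'] at hlt
        obtain ⟨y, hy⟩ := iInf_lt_iff.1 hlt
        have hfb : f (x' - y) ≠ ⊥ := hfp.2 _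
        have hgb : g y ≠ ⊥ := hgp.2 _
        have hft : f (x' - y) ≠ ⊤ := by
          intro htop
          rw [htop, EReal.top_add_of_ne_bot hgb] at hy
          exact absurd hy (by simp)
        have hgt : g y ≠ ⊤ := by
          intro htop
          rw [htop, EReal.add_top_of_ne_bot hfb] at hy
          exact absurd hy (by simp)
        set s := (f (x' - y)).toReal with hs
        set u := (g y).toReal with hu
        have hfs : f (x' - y) = (s : EReal) := (EReal.coe_toReal hft hfb).symm
        have hgu : g y = (u : EReal) := (EReal.coe_toReal hgt hgb).symm
        have hsum : s + u < w + ε := by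
          rw [hfs, hgu, ← EReal.coe_add] at hy
          exact_mod_cast hy
        refine ⟨(y, s, u), ⟨⟨?_, ?_⟩, ?_⟩⟩
        · show f ((x', w + ε).1 - y) ≤ (s : EReal)
          rw [hfs]
        · show g y ≤ (u : EReal)
          rw [hgu]
        · show s + u - (w + ε) ≤ 0
          linarith
      -- take the limit ε = 1/(k+1) → 0
      have htend : Filter.Tendsto (fun k : ℕ => (((x' : (EuclideanSpace ℝ (Fin n))), w + 1 / (k + 1 : ℝ)))) Filter.atTop
          (nhds (x', w)) := by
        refine Filter.Tendsto.prodMk_nhds tendsto_const_nhds ?_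
        have : Filter.Tendsto (fun k : ℕ => w + 1 / (k + 1 : ℝ)) Filter.atTop (nhds (w + 0)) :=
          Filter.Tendsto.const_add _ tendsto_one_div_add_atTop_nhds_zero_nat
        simpa using this
      refine hPclosed.mem_of_tendsto htend ?_
      filter_upwards with k
      exact happrox (1 / (k + 1 : ℝ)) (by positivity)
  rw [hepi] at hP
  obtain ⟨ι, _, φ, b, hepi_eq⟩ := hP
  -- splitting of the linear functionals
  have hsplit : ∀ (i : ι) (z : (EuclideanSpace ℝ (Fin n))) (t : ℝ),
      φ i (z, t) = φ i (z, 0) + t * φ i ((0 : (EuclideanSpace ℝ (Fin n))), 1) := by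
    intro i z t
    have : ((z : (EuclideanSpace ℝ (Fin n))), t) = (z, (0:ℝ)) + t • ((0 : (EuclideanSpace ℝ (Fin n))), (1:ℝ)) := by
      simp [Prod.ext_iff]
    rw [this, map_add, map_smul, smul_eq_mul]
  have hmemiff : ∀ p : (EuclideanSpace ℝ (Fin n)) × ℝ, h p.1 ≤ (p.2 : EReal) ↔ ∀ i, φ i p ≤ b i := by
    intro p
    constructor
    · intro hp
      have : p ∈ {p : (EuclideanSpace ℝ (Fin n)) × ℝ | h p.1 ≤ (p.2 : EReal)} := hp
      rw [hepi_eq] at this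
      exact this
    · intro hp
      have : p ∈ {q : (EuclideanSpace ℝ (Fin n)) × ℝ | ∀ i, φ i q ≤ b i} := hp
      rw [← hepi_eq] at this
      exact this
  by_cases hbot : ∃ x0, h x0 = ⊥
  · -- degenerate case : h takes the value ⊥, so h ≡ ⊥ on its domain
    obtain ⟨x0, hx0⟩ := hbot
    have hvert : ∀ (i : ι) (t : ℝ), φ i (x0, t) ≤ b i := by
      intro i t
      exact (hmemiff (x0, t)).1 (by rw [hx0]; exact bot_le) i
    have hcoeff : ∀ i : ι, φ i ((0 : (EuclideanSpace ℝ (Fin n))), 1) = 0 := by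
      intro i
      by_contra hc
      have := hvert i ((b i - φ i (x0, 0) + 1) / φ i ((0:(EuclideanSpace ℝ (Fin n))), 1))
      rw [hsplit, div_mul_cancel₀ _ hc] at this
      linarith
    have hxmem : ∀ i, φ i (x, (h x).toReal) ≤ b i :=
      (hmemiff (x, (h x).toReal)).1 (EReal.le_coe_toReal hx)
    have hxbot : h x = ⊥ := by
      by_contra hb
      have hall : ∀ t : ℝ, h x ≤ (t : EReal) := by
        intro t
        refine (hmemiff (x, t)).2 ?_
        intro i
        rw [hsplit, hcoeff, mul_zero, add_zero]
        have := hxmem i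
        rw [hsplit, hcoeff, mul_zero, add_zero] at this
        exact this
      have h1 := hall ((h x).toReal - 1)
      have h1' : ((h x).toReal : EReal) ≤ ((h x).toReal - 1 : ℝ) := by
        rw [EReal.coe_toReal hx hb]
        exact h1
      rw [EReal.coe_le_coe_iff] at h1'
      linarith
    have hconjtop : ∀ v, EConj h v = ⊤ := by
      intro v
      refine top_unique ?_
      have : ((⟪v, x0⟫ : ℝ) : EReal) - h x0 ≤ ⨆ z, ((⟪v, z⟫ : ℝ) : EReal) - h z :=
        le_iSup (fun z => ((⟪v, z⟫ : ℝ) : EReal) - h z) x0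
      rw [hx0, EReal.coe_sub_bot] at this
      exact this
    rw [hxbot]
    show (⨆ v, ((⟪x, v⟫ : ℝ) : EReal) - EConj h v) = ⊥
    have : ∀ v : (EuclideanSpace ℝ (Fin n)), ((⟪x, v⟫ : ℝ) : EReal) - EConj h v = ⊥ := by
      intro v
      rw [hconjtop v, EReal.sub_top]
    simp only [this, iSup_bot]
  · -- main case : h is proper
    push_neg at hbot
    have hb : h x ≠ ⊥ := hbot x
    refine le_antisymm ?_ ?_
    · -- Fenchel–Young : h** ≤ h
      refine iSup_le ?_
      intro v
      have h1 : ((⟪v, x⟫ : ℝ) : EReal) - h x ≤ EConj h v :=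
        le_iSup (fun z => ((⟪v, z⟫ : ℝ) : EReal) - h z) x
      calc ((⟪x, v⟫ : ℝ) : EReal) - EConj h v
          ≤ ((⟪x, v⟫ : ℝ) : EReal) - (((⟪v, x⟫ : ℝ) : EReal) - h x) :=
            EReal.sub_le_sub le_rfl h1
        _ = h x := by
            rw [← EReal.coe_toReal hx hb, real_inner_comm x v]
            rw [← EReal.coe_sub, ← EReal.coe_sub]
            norm_cast
            ring
    · -- reverse inequality via separation from the polyhedral description
      by_contra hlt
      push_neg at hlt
      obtain ⟨z0, hz1, hz2⟩ := exists_between hlt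
      have hz0top : z0 ≠ ⊤ := ne_top_of_lt hz2
      have hz0bot : z0 ≠ ⊥ := by
        intro hb0
        rw [hb0] at hz1
        exact absurd hz1 (by simp)
      set t := z0.toReal with ht
      have htz : (t : EReal) = z0 := EReal.coe_toReal hz0top hz0bot
      set c := (h x).toReal with hcdef
      have hc : (c : EReal) = h x := EReal.coe_toReal hx hb
      have htc : t < c := by
        rw [← EReal.coe_lt_coe_iff, htz, hc]
        exact hz2
      -- (x, t) is not in the epigraph
      have hnotmem : ¬ ∀ i, φ i (x, t) ≤ b i := by
        intro hmem
        have := (hmemiff (x, t)).2 hmem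
        rw [← hc] at this
        rw [EReal.coe_le_coe_iff] at this
        linarith
      push_neg at hnotmem
      obtain ⟨i0, hi0⟩ := hnotmem
      have hmemc : ∀ i, φ i (x, c) ≤ b i :=
        (hmemiff (x, c)).1 (le_of_eq hc.symm)
      set ρ := φ i0 ((0 : (EuclideanSpace ℝ (Fin n))), 1) with hρdef
      have hρneg : ρ < 0 := by
        have h1 := hi0
        have h2 := hmemc i0
        rw [hsplit] at h1 h2
        by_contra hge
        push_neg at hge
        nlinarith
      -- the linear functional z ↦ φ i0 (z, 0), represented by a vector
      set ψ : (EuclideanSpace ℝ (Fin n)) →ₗ[ℝ] ℝ := (φ i0).comp (LinearMap.inl ℝ (EuclideanSpace ℝ (Fin n)) ℝ) with hψdef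
      have hψ : ∀ z : (EuclideanSpace ℝ (Fin n)), ψ z = φ i0 (z, 0) := fun z => rfl
      obtain ⟨v0, hv0⟩ : ∃ v0 : (EuclideanSpace ℝ (Fin n)), ∀ z, ⟪v0, z⟫ = ψ z := by
        refine ⟨(InnerProductSpace.toDual ℝ (EuclideanSpace ℝ (Fin n))).symm (LinearMap.toContinuousLinearMap ψ), ?_⟩
        intro z
        simp [InnerProductSpace.toDual_symm_apply]
      set μ := (-ρ)⁻¹ with hμdef
      have hμpos : 0 < μ := by
        rw [hμdef]
        exact inv_pos.2 (by linarith)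
      have hμ1 : μ * (-ρ) = 1 := inv_mul_cancel₀ (by linarith)
      have hμρ : μ * ρ = -1 := by linear_combination -hμ1
      set v : (EuclideanSpace ℝ (Fin n)) := μ • v0 with hvdef
      set β : ℝ := μ * b i0 with hβdef
      have hinner : ∀ z : (EuclideanSpace ℝ (Fin n)), ⟪v, z⟫ = μ * ψ z := by
        intro z
        rw [hvdef, real_inner_smul_left, hv0]
      -- v is an affine minorant slope : ⟪v, z⟫ - β ≤ h z for all z
      have hminor : ∀ z : (EuclideanSpace ℝ (Fin n)), ((⟪v, z⟫ - β : ℝ) : EReal) ≤ h z := by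
        intro z
        by_cases hzt : h z = ⊤
        · rw [hzt]; exact le_top
        · have hzb : h z ≠ ⊥ := hbot z
          have hzmem : ∀ i, φ i (z, (h z).toReal) ≤ b i :=
            (hmemiff (z, (h z).toReal)).1 (EReal.le_coe_toReal hzt)
          have hkey := hzmem i0
          rw [hsplit, ← hψ, ← hρdef] at hkey
          rw [← EReal.coe_toReal hzt hzb, EReal.coe_le_coe_iff]
          rw [hinner, hβdef]
          have e1 : μ * (ψ z + (h z).toReal * ρ) ≤ μ * b i0 :=
            mul_le_mul_of_nonneg_left hkey (le_of_lt hμpos)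
          have e2 : μ * (ψ z + (h z).toReal * ρ) = μ * ψ z - (h z).toReal := by
            linear_combination ((h z).toReal) * hμρ
          linarith
      have hconj_le : EConj h v ≤ (β : EReal) := by
        refine iSup_le ?_
        intro z
        by_cases hzt : h z = ⊤
        · rw [hzt, EReal.sub_top]; exact bot_le
        · have hzb : h z ≠ ⊥ := hbot z
          rw [← EReal.coe_toReal hzt hzb, ← EReal.coe_sub, EReal.coe_le_coe_iff]
          have := hminor z
          rw [← EReal.coe_toReal hzt hzb, EReal.coe_le_coe_iff] at this
          linarith
      -- the contradiction
      have hgt : t < ⟪v, x⟫ - β := by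
        have h1 := hi0
        rw [hsplit, ← hψ, ← hρdef] at h1
        rw [hinner, hβdef]
        have e1 : μ * b i0 < μ * (ψ x + t * ρ) := mul_lt_mul_of_pos_left h1 hμpos
        have e2 : μ * (ψ x + t * ρ) = μ * ψ x - t := by
          linear_combination t * hμρ
        linarith
      have hfinal : ((⟪v, x⟫ - β : ℝ) : EReal) ≤ EConj (EConj h) x := by
        have step : ((⟪x, v⟫ : ℝ) : EReal) - EConj h v ≤ EConj (EConj h) x :=
          le_iSup (fun w => ((⟪x, w⟫ : ℝ) : EReal) - EConj h w) v
        refine le_trans ?_ step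
        calc ((⟪v, x⟫ - β : ℝ) : EReal) = ((⟪x, v⟫ : ℝ) : EReal) - (β : EReal) := by
              rw [real_inner_comm v x, EReal.coe_sub]
          _ ≤ ((⟪x, v⟫ : ℝ) : EReal) - EConj h v := EReal.sub_le_sub le_rfl hconj_le
      have : ((⟪v, x⟫ - β : ℝ) : EReal) < ((⟪v, x⟫ - β : ℝ) : EReal) := by
        calc ((⟪v, x⟫ - β : ℝ) : EReal) ≤ EConj (EConj h) x := hfinal
          _ < z0 := hz1
          _ = (t : EReal) := htz.symm
          _ < ((⟪v, x⟫ - β : ℝ) : EReal) := EReal.coe_lt_coe_iff.2 hgt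
      exact absurd this (lt_irrefl _)
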